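/- For the von Mises distribution M_Ω on S², the Q-tensor moment satisfies ∫_{S²} (ω⊗ω − (1/3)Id) M_Ω(ω) dω = c₄ (Ω⊗Ω − (1/3)Id), where c₄ = 1 − (3/2)⟨sin²θ⟩ with ⟨g⟩ = ∫₀^π g(θ) sinθ M̃(θ) dθ / ∫₀^π sinθ M̃(θ) dθ and M̃(θ) = Z⁻¹ e^{κ cosθ}. -/

import Mathlib

open Real

/-- Parametrization of the unit sphere adapted to `Ω` via an orthonormal frame. -/
noncomputable def ωpar (Ω e₁ e₂ : Fin 3 → ℝ) (θ φ : ℝ) : Fin 3 → ℝ :=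
  fun i => Real.sin θ * Real.cos φ * e₁ i + Real.sin θ * Real.sin φ * e₂ i + Real.cos θ * Ω i

/-- `∫₀^π e^{κ cos θ} sin θ dθ`. -/
noncomputable def Zpolar (κ : ℝ) : ℝ :=
  ∫ θ in (0:ℝ)..π, Real.exp (κ * Real.cos θ) * Real.sin θ

/-- `c₄ = 1 − (3/2)⟨sin²θ⟩`, the average taken with weight `sinθ M̃(θ)`,
`M̃(θ) ∝ e^{κ cosθ}`. -/
noncomputable def cFour (κ : ℝ) : ℝ :=
  1 - (3/2) * ((∫ θ in (0:ℝ)..π, Real.sin θ ^ 2 * (Real.sin θ * Real.exp (κ * Real.cos θ))) /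
    (∫ θ in (0:ℝ)..π, Real.sin θ * Real.exp (κ * Real.cos θ)))

section Helpers

open MeasureTheory Matrix

lemma pi_iint_apply' {f : ℝ → Fin 3 → Fin 3 → ℝ} {a b : ℝ}
    (hf : Continuous f) (i j : Fin 3) :
    (∫ x in a..b, f x) i j = ∫ x in a..b, f x i j := by
  have h1 := (ContinuousLinearMap.intervalIntegral_comp_comm
      (ContinuousLinearMap.proj (R := ℝ) (φ := fun _ : Fin 3 => Fin 3 → ℝ) i)
      (hf.intervalIntegrable (μ := volume) a b)).symm
  have h2 := (ContinuousLinearMap.intervalIntegral_comp_comm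
      (ContinuousLinearMap.proj (R := ℝ) (φ := fun _ : Fin 3 => ℝ) j)
      (((continuous_apply i).comp hf).intervalIntegrable (μ := volume) a b)).symm
  simp only [ContinuousLinearMap.proj_apply, Function.comp] at h1 h2
  rw [congrFun h1 j, h2]

lemma phi_int' (A B C D E K : ℝ) :
    (∫ φ in (0:ℝ)..(2*π),
      (A * Real.cos φ ^ 2 + B * Real.sin φ ^ 2 + C * (Real.sin φ * Real.cos φ)
        + D * Real.cos φ + E * Real.sin φ + K)) = (A + B) * π + K * (2 * π) := by
  have hd : ∀ x ∈ Set.uIcc (0:ℝ) (2*π), HasDerivAt (fun φ : ℝ =>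
      A*((φ + Real.sin φ*Real.cos φ)/2) + B*((φ - Real.sin φ*Real.cos φ)/2)
        + C*(Real.sin φ^2/2) + D*Real.sin φ - E*Real.cos φ + K*φ)
      (A * Real.cos x ^ 2 + B * Real.sin x ^ 2 + C * (Real.sin x * Real.cos x)
        + D * Real.cos x + E * Real.sin x + K) x := by
    intro x _
    have h := ((((((((hasDerivAt_id x).add ((hasDerivAt_sin x).mul
      (hasDerivAt_cos x))).div_const 2).const_mul A).add
      ((((hasDerivAt_id x).sub ((hasDerivAt_sin x).mul (hasDerivAt_cos x))).div_const 2).const_mul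
        B)).add ((((hasDerivAt_sin x).pow 2).div_const 2).const_mul C)).add
      ((hasDerivAt_sin x).const_mul D)).sub ((hasDerivAt_cos x).const_mul E)).add
      ((hasDerivAt_id x).const_mul K)
    refine h.congr_deriv ?_
    have hs := Real.sin_sq_add_cos_sq x
    push_cast
    linear_combination (-((A+B)/2)) * hs
  rw [intervalIntegral.integral_eq_sub_of_hasDerivAt hd (by
    apply Continuous.intervalIntegrable; fun_prop)]
  simp [Real.sin_two_pi, Real.cos_two_pi]
  ring

lemma frame_complete' (Ω e₁ e₂ : Fin 3 → ℝ)
    (h1 : ∑ i, e₁ i * e₁ i = 1) (h2 : ∑ i, e₂ i * e₂ i = 1) (hΩ : ∑ i, Ω i * Ω i = 1)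
    (h12 : ∑ i, e₁ i * e₂ i = 0) (h1Ω : ∑ i, e₁ i * Ω i = 0) (h2Ω : ∑ i, e₂ i * Ω i = 0)
    (i j : Fin 3) :
    e₁ i * e₁ j + e₂ i * e₂ j + Ω i * Ω j = (if i = j then (1:ℝ) else 0) := by
  simp only [Fin.sum_univ_three] at h1 h2 hΩ h12 h1Ω h2Ω
  let A : Matrix (Fin 3) (Fin 3) ℝ := Matrix.of ![e₁, e₂, Ω]
  have hA : A * Aᵀ = 1 := by
    ext a b
    fin_cases a <;> fin_cases b <;>
      simp [A, Matrix.mul_apply, Fin.sum_univ_three, Matrix.one_apply, Matrix.vecHead,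
        Matrix.vecTail, Function.comp, Matrix.transpose_apply] <;>
      ring_nf <;> ring_nf at h1 h2 hΩ h12 h1Ω h2Ω <;> linarith
  have hATA : Aᵀ * A = 1 := mul_eq_one_comm.mp hA
  have h := congrFun (congrFun hATA i) j
  simp [A, Matrix.mul_apply, Fin.sum_univ_three, Matrix.one_apply, Matrix.vecHead,
    Matrix.vecTail, Function.comp, Matrix.transpose_apply] at h
  rw [← h]

end Helpers

/-- Q-tensor moment of the von Mises distribution:
`∫_{S²} (ω⊗ω − Id/3) M_Ω dω = c₄ (Ω⊗Ω − Id/3)`. -/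
theorem stmt7 (κ : ℝ) (hκ : 0 < κ) (Ω e₁ e₂ : Fin 3 → ℝ)
    (h1 : ∑ i, e₁ i * e₁ i = 1) (h2 : ∑ i, e₂ i * e₂ i = 1) (hΩ : ∑ i, Ω i * Ω i = 1)
    (h12 : ∑ i, e₁ i * e₂ i = 0) (h1Ω : ∑ i, e₁ i * Ω i = 0) (h2Ω : ∑ i, e₂ i * Ω i = 0) :
    ((2 * π * Zpolar κ)⁻¹ • (∫ θ in (0:ℝ)..π, ∫ φ in (0:ℝ)..(2 * π),
        (Real.exp (κ * Real.cos θ) * Real.sin θ) •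
          (fun i j => ωpar Ω e₁ e₂ θ φ i * ωpar Ω e₁ e₂ θ φ j -
            (1/3) * (if i = j then (1:ℝ) else 0) : Fin 3 → Fin 3 → ℝ)))
      = cFour κ • (fun i j => Ω i * Ω j - (1/3) * (if i = j then (1:ℝ) else 0)) := by
  have hframe := frame_complete' Ω e₁ e₂ h1 h2 hΩ h12 h1Ω h2Ω
  have hcont_in : ∀ θ : ℝ, Continuous (fun φ : ℝ =>
      (Real.exp (κ * Real.cos θ) * Real.sin θ) •
        (fun i j => ωpar Ω e₁ e₂ θ φ i * ωpar Ω e₁ e₂ θ φ j -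
          (1/3) * (if i = j then (1:ℝ) else 0) : Fin 3 → Fin 3 → ℝ)) := by
    intro θ
    exact (continuous_pi fun i => continuous_pi fun j => (by
      unfold ωpar; fun_prop : Continuous fun φ : ℝ => ωpar Ω e₁ e₂ θ φ i * ωpar Ω e₁ e₂ θ φ j -
        (1/3) * (if i = j then (1:ℝ) else 0))).const_smul (Real.exp (κ * Real.cos θ) * Real.sin θ)
  have hinner : ∀ θ : ℝ, (∫ φ in (0:ℝ)..(2 * π),
      (Real.exp (κ * Real.cos θ) * Real.sin θ) •
        (fun i j => ωpar Ω e₁ e₂ θ φ i * ωpar Ω e₁ e₂ θ φ j -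
          (1/3) * (if i = j then (1:ℝ) else 0) : Fin 3 → Fin 3 → ℝ))
      = (fun i j => Real.exp (κ * Real.cos θ) * Real.sin θ * Real.sin θ ^ 2 *
            (e₁ i * e₁ j + e₂ i * e₂ j) * π
          + Real.exp (κ * Real.cos θ) * Real.sin θ *
            (Real.cos θ ^ 2 * (Ω i * Ω j) - 1/3 * (if i = j then (1:ℝ) else 0)) * (2 * π)) := by
    intro θ
    funext i j
    rw [pi_iint_apply' (hcont_in θ) i j]
    have hfun : (fun φ => ((Real.exp (κ * Real.cos θ) * Real.sin θ) •
        (fun i j => ωpar Ω e₁ e₂ θ φ i * ωpar Ω e₁ e₂ θ φ j -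
          (1/3) * (if i = j then (1:ℝ) else 0) : Fin 3 → Fin 3 → ℝ)) i j)
        = fun φ =>
          (Real.exp (κ * Real.cos θ) * Real.sin θ * (Real.sin θ^2 * (e₁ i * e₁ j)))
            * Real.cos φ ^ 2
        + (Real.exp (κ * Real.cos θ) * Real.sin θ * (Real.sin θ^2 * (e₂ i * e₂ j)))
            * Real.sin φ ^ 2
        + (Real.exp (κ * Real.cos θ) * Real.sin θ *
            (Real.sin θ^2 * (e₁ i * e₂ j + e₂ i * e₁ j))) * (Real.sin φ * Real.cos φ)
        + (Real.exp (κ * Real.cos θ) * Real.sin θ *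
            (Real.sin θ * Real.cos θ * (e₁ i * Ω j + Ω i * e₁ j))) * Real.cos φ
        + (Real.exp (κ * Real.cos θ) * Real.sin θ *
            (Real.sin θ * Real.cos θ * (e₂ i * Ω j + Ω i * e₂ j))) * Real.sin φ
        + (Real.exp (κ * Real.cos θ) * Real.sin θ *
            (Real.cos θ^2 * (Ω i * Ω j) - 1/3 * (if i = j then (1:ℝ) else 0))) := by
      funext φ
      simp only [Pi.smul_apply, smul_eq_mul, ωpar]
      ring
    rw [hfun, phi_int']
    ring
  rw [intervalIntegral.integral_congr (fun θ _ => hinner θ)]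
  have hcont_out : Continuous (fun θ : ℝ =>
      (fun i j => Real.exp (κ * Real.cos θ) * Real.sin θ * Real.sin θ ^ 2 *
            (e₁ i * e₁ j + e₂ i * e₂ j) * π
          + Real.exp (κ * Real.cos θ) * Real.sin θ *
            (Real.cos θ ^ 2 * (Ω i * Ω j) - 1/3 * (if i = j then (1:ℝ) else 0)) * (2 * π)
          : Fin 3 → Fin 3 → ℝ)) :=
    continuous_pi fun i => continuous_pi fun j => by fun_prop
  funext i j
  simp only [Pi.smul_apply, smul_eq_mul]
  rw [pi_iint_apply' hcont_out i j]
  rw [intervalIntegral.integral_congr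
    (g := fun θ => (π * (e₁ i * e₁ j + e₂ i * e₂ j) - 2*π*(Ω i * Ω j)) *
        (Real.sin θ ^ 2 * (Real.sin θ * Real.exp (κ * Real.cos θ)))
      + (2*π*(Ω i * Ω j) - 2*π/3*(if i = j then (1:ℝ) else 0)) *
        (Real.sin θ * Real.exp (κ * Real.cos θ)))
    (fun θ _ => by simp only; rw [Real.cos_sq']; ring)]
  have hS : IntervalIntegrable
      (fun θ => Real.sin θ ^ 2 * (Real.sin θ * Real.exp (κ * Real.cos θ)))
      MeasureTheory.volume 0 π :=
    Continuous.intervalIntegrable (by fun_prop) _ _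
  have hZI : IntervalIntegrable (fun θ => Real.sin θ * Real.exp (κ * Real.cos θ))
      MeasureTheory.volume 0 π :=
    Continuous.intervalIntegrable (by fun_prop) _ _
  rw [intervalIntegral.integral_add (hS.const_mul _) (hZI.const_mul _),
    intervalIntegral.integral_const_mul, intervalIntegral.integral_const_mul]
  have hz : (∫ θ in (0:ℝ)..π, Real.sin θ * Real.exp (κ * Real.cos θ)) = Zpolar κ := by
    unfold Zpolar
    exact intervalIntegral.integral_congr fun θ _ => mul_comm _ _
  have hZpos : 0 < Zpolar κ := by
    unfold Zpolar
    apply intervalIntegral.intervalIntegral_pos_of_pos_on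
    · exact Continuous.intervalIntegrable (by fun_prop) _ _
    · intro x hx
      exact mul_pos (Real.exp_pos _) (Real.sin_pos_of_pos_of_lt_pi hx.1 hx.2)
    · exact Real.pi_pos
  have hE : e₁ i * e₁ j + e₂ i * e₂ j = (if i = j then (1:ℝ) else 0) - Ω i * Ω j := by
    linarith [hframe i j]
  rw [hz, hE]
  unfold cFour
  rw [hz]
  set d : ℝ := (if i = j then (1:ℝ) else 0) with hd
  set S := ∫ θ in (0:ℝ)..π, Real.sin θ ^ 2 * (Real.sin θ * Real.exp (κ * Real.cos θ)) with hSdef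
  field_simp
  ring
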